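/- Let p be an odd prime. Then the number of t ∈ ℤ/pℤ satisfying (t(t−1)/p) = ((1−t)/p) = −1 is at least (p−5)/4. -/

import Mathlib

def legSym (p : ℕ) [Fact p.Prime] (a : ZMod p) : ℤ := legendreSym p a.val

section aux
variable (p : ℕ) [Fact p.Prime]

private lemma legSym_eq (a : ZMod p) : legSym p a = quadraticChar (ZMod p) a := by
  simp [legSym, legendreSym, ZMod.natCast_val, ZMod.intCast_cast, ZMod.cast_id]

private lemma sum_chi (hp : p ≠ 2) : ∑ a : ZMod p, quadraticChar (ZMod p) a = 0 := by
  have : ringChar (ZMod p) ≠ 2 := by rw [ZMod.ringChar_zmod_n]; exact hp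
  exact quadraticChar_sum_zero this

private lemma sum_chi_erase (hp : p ≠ 2) (b : ZMod p) (_hb : b ≠ 0) :
    ∑ a ∈ Finset.univ.erase b, quadraticChar (ZMod p) a =
      - quadraticChar (ZMod p) b := by
  rw [Finset.sum_erase_eq_sub (Finset.mem_univ b), sum_chi p hp]
  ring

private lemma sumB (hp : p ≠ 2) : ∑ t : ZMod p, quadraticChar (ZMod p) (1 - t) = 0 := by
  rw [← sum_chi p hp]
  exact Fintype.sum_equiv (Equiv.subLeft (1 : ZMod p)) _ _ (fun x => by simp)

private lemma sumA (hp : p ≠ 2) :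
    ∑ t : ZMod p, quadraticChar (ZMod p) (t * (t - 1)) = -1 := by
  have h0 : ∑ t : ZMod p, quadraticChar (ZMod p) (t * (t - 1)) =
      ∑ t ∈ Finset.univ.erase 0, quadraticChar (ZMod p) (t * (t - 1)) := by
    rw [Finset.sum_erase]
    simp
  rw [h0]
  have hbij : ∑ t ∈ Finset.univ.erase 0, quadraticChar (ZMod p) (t * (t - 1)) =
      ∑ s ∈ Finset.univ.erase 1, quadraticChar (ZMod p) s := by
    apply Finset.sum_nbij' (i := fun t => 1 - t⁻¹) (j := fun s => (1 - s)⁻¹)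
    · intro a ha
      simp only [Finset.mem_erase, Finset.mem_univ, and_true] at ha ⊢
      intro h
      apply ha
      have : a⁻¹ = 0 := by linear_combination -h
      simpa using this
    · intro a ha
      simp only [Finset.mem_erase, Finset.mem_univ, and_true] at ha ⊢
      have : (1 : ZMod p) - a ≠ 0 := sub_ne_zero.mpr (Ne.symm ha)
      exact inv_ne_zero this
    · intro a ha
      simp only [Finset.mem_erase, Finset.mem_univ, and_true] at ha
      field_simp
      ring
    · intro a ha
      simp only [Finset.mem_erase, Finset.mem_univ, and_true] at ha
      have : (1 : ZMod p) - a ≠ 0 := sub_ne_zero.mpr (Ne.symm ha)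
      field_simp
      ring
    · intro a ha
      simp only [Finset.mem_erase, Finset.mem_univ, and_true] at ha
      have key : a * (a - 1) = a ^ 2 * (1 - a⁻¹) := by
        field_simp
      rw [key, map_mul, quadraticChar_sq_one' ha, one_mul]
  rw [hbij, sum_chi_erase p hp 1 one_ne_zero, map_one]

private lemma sumC (hp : p ≠ 2) :
    ∑ t : ZMod p, quadraticChar (ZMod p) (t * (t - 1)) * quadraticChar (ZMod p) (1 - t) =
      - quadraticChar (ZMod p) (-1) := by
  have h0 : ∑ t : ZMod p,
      quadraticChar (ZMod p) (t * (t - 1)) * quadraticChar (ZMod p) (1 - t) =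
      ∑ t ∈ Finset.univ.erase 1,
      quadraticChar (ZMod p) (t * (t - 1)) * quadraticChar (ZMod p) (1 - t) := by
    rw [Finset.sum_erase]
    simp
  rw [h0]
  have h1 : ∀ t ∈ Finset.univ.erase 1,
      quadraticChar (ZMod p) (t * (t - 1)) * quadraticChar (ZMod p) (1 - t) =
      quadraticChar (ZMod p) (-1) * quadraticChar (ZMod p) t := by
    intro t ht
    simp only [Finset.mem_erase, Finset.mem_univ, and_true] at ht
    have ht' : t - 1 ≠ 0 := sub_ne_zero.mpr ht
    rw [← map_mul]
    have key : t * (t - 1) * (1 - t) = -1 * (t * (t - 1) ^ 2) := by ring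
    rw [key, map_mul, map_mul, quadraticChar_sq_one' ht', mul_one]
  rw [Finset.sum_congr rfl h1, ← Finset.mul_sum, sum_chi_erase p hp 1 one_ne_zero, map_one]
  ring

end aux

theorem count_t_ge (p : ℕ) [Fact p.Prime] (hp : p ≠ 2) :
    ((p : ℝ) - 5) / 4 ≤
      ((Finset.univ.filter
        (fun t : ZMod p => legSym p (t * (t - 1)) = -1 ∧ legSym p (1 - t) = -1)).card : ℝ) := by
  set χ : ZMod p → ℤ := fun a => quadraticChar (ZMod p) a with hχ
  set cond : ZMod p → Prop :=
    fun t : ZMod p => legSym p (t * (t - 1)) = -1 ∧ legSym p (1 - t) = -1 with hcond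
  set N : ℕ := (Finset.univ.filter cond).card with hN
  -- pointwise bound
  have pointwise : ∀ t : ZMod p, (1 - χ (t * (t - 1))) * (1 - χ (1 - t)) ≤
      (if cond t then 4 else 0) + (if t = 1 then 1 else 0) := by
    intro t
    have hc : cond t ↔ (χ (t * (t - 1)) = -1 ∧ χ (1 - t) = -1) := by
      rw [hcond, hχ]
      simp only [legSym_eq]
    by_cases h1 : t = 1
    · subst h1
      have e : (1 - χ (1 * (1 - 1))) * (1 - χ (1 - 1)) = 1 := by simp [hχ]
      rw [e, if_pos rfl]
      have : (0:ℤ) ≤ if cond 1 then 4 else 0 := by split <;> norm_num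
      linarith
    by_cases h0 : t = 0
    · subst h0
      have e : (1 - χ (0 * (0 - 1))) * (1 - χ (1 - 0)) = 0 := by simp [hχ]
      rw [e]
      have : (0:ℤ) ≤ if cond 0 then 4 else 0 := by split <;> norm_num
      have : (0:ℤ) ≤ if (0 : ZMod p) = 1 then 1 else 0 := by split <;> norm_num
      omega
    · have ha : t * (t - 1) ≠ 0 := mul_ne_zero h0 (sub_ne_zero.mpr h1)
      have hb : (1 : ZMod p) - t ≠ 0 := sub_ne_zero.mpr (Ne.symm h1)
      have e1 : χ (t * (t - 1)) = 1 ∨ χ (t * (t - 1)) = -1 := quadraticChar_dichotomy ha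
      have e2 : χ (1 - t) = 1 ∨ χ (1 - t) = -1 := quadraticChar_dichotomy hb
      by_cases hcnd : cond t
      · rw [if_pos hcnd]
        rw [hc] at hcnd
        rw [hcnd.1, hcnd.2, if_neg h1]
        norm_num
      · rw [if_neg hcnd, if_neg h1]
        rw [hc] at hcnd
        rcases e1 with e1 | e1 <;> rcases e2 with e2 | e2
        · rw [e1, e2]; norm_num
        · rw [e1, e2]; norm_num
        · rw [e1, e2]; norm_num
        · exact absurd ⟨e1, e2⟩ hcnd
  -- sum of the left side
  have hsumL : ∑ t : ZMod p, (1 - χ (t * (t - 1))) * (1 - χ (1 - t)) =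
      (p : ℤ) + 1 - χ (-1) := by
    have expand : ∀ t : ZMod p, (1 - χ (t * (t - 1))) * (1 - χ (1 - t)) =
        1 - χ (t * (t - 1)) - χ (1 - t) + χ (t * (t - 1)) * χ (1 - t) := by
      intro t; ring
    rw [Finset.sum_congr rfl (fun t _ => expand t)]
    rw [Finset.sum_add_distrib, Finset.sum_sub_distrib, Finset.sum_sub_distrib,
      Finset.sum_const, Finset.card_univ, ZMod.card]
    rw [hχ]
    rw [sumA p hp, sumB p hp, sumC p hp]
    push_cast
    ring
  -- sum of the right side
  have hsumR : ∑ t : ZMod p, ((if cond t then (4 : ℤ) else 0) + (if t = 1 then 1 else 0)) =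
      4 * (N : ℤ) + 1 := by
    rw [Finset.sum_add_distrib]
    congr 1
    · rw [← Finset.sum_filter, Finset.sum_const, hN]
      ring
    · rw [Finset.sum_ite_eq' Finset.univ (1 : ZMod p) (fun _ => (1 : ℤ))]
      simp
  have hle : (p : ℤ) + 1 - χ (-1) ≤ 4 * (N : ℤ) + 1 := by
    rw [← hsumL, ← hsumR]
    exact Finset.sum_le_sum (fun t _ => pointwise t)
  have hneg : χ (-1) ≤ 1 := by
    have : (-1 : ZMod p) ≠ 0 := by simp
    rcases quadraticChar_dichotomy this with h | h <;> rw [hχ] <;> simp [h]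
  have hZ : (p : ℤ) - 5 ≤ 4 * (N : ℤ) := by linarith
  have hR : ((p : ℝ) - 5) / 4 ≤ (N : ℝ) := by
    have : (p : ℝ) - 5 ≤ 4 * (N : ℝ) := by exact_mod_cast hZ
    linarith
  exact hR
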